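/- Let D be an acyclic DFA over a nonempty alphabet α whose state type σ is a finite type with n elements, with unique recurrent (dead) state d. If the dead state d is not an accepting state, then every word accepted by D has length strictly less than n; in particular, the language accepted by D is a finite set of words (assuming the alphabet α is finite). -/

import Mathlib

/-- A state `q` of a DFA is recurrent if there is a nonempty word `x`
with `evalFrom q x = q`. -/
def DFA.Recurrent {α σ : Type*} (D : DFA α σ) (q : σ) : Prop :=
  ∃ x : List α, x ≠ [] ∧ D.evalFrom q x = q

lemma evalFrom_app {α σ : Type*} (D : DFA α σ) (s : σ) (x y : List α) :
    D.evalFrom s (x ++ y) = D.evalFrom (D.evalFrom s x) y := by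
  simp [DFA.evalFrom, List.foldl_append]

lemma step_dead {α σ : Type*} [Finite σ] (D : DFA α σ) (d : σ)
    (huniq : ∀ q : σ, D.Recurrent q → q = d) (a : α) : D.step d a = d := by
  set q := D.step d a with hq
  have key : ∀ k, D.evalFrom q (List.replicate k a) = D.evalFrom d (List.replicate (k+1) a) := by
    intro k
    induction k with
    | zero => simp [DFA.evalFrom, hq]
    | succ n ih =>
      rw [List.replicate_succ', List.replicate_succ' (n := n+1)]
      rw [evalFrom_app, evalFrom_app, ih]
  -- pigeonhole on k ↦ evalFrom q (replicate k a)
  obtain ⟨i, j, hij, hfe⟩ : ∃ i j : ℕ, i < j ∧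
      D.evalFrom q (List.replicate i a) = D.evalFrom q (List.replicate j a) := by
    obtain ⟨i, j, hne, he⟩ := Finite.exists_ne_map_eq_of_infinite
      (fun k : ℕ => D.evalFrom q (List.replicate k a))
    rcases hne.lt_or_gt with h | h
    · exact ⟨i, j, h, he⟩
    · exact ⟨j, i, h, he.symm⟩
  have hrec : D.Recurrent (D.evalFrom q (List.replicate i a)) := by
    refine ⟨List.replicate (j - i) a, by simp [Nat.sub_ne_zero_of_lt hij], ?_⟩
    rw [← evalFrom_app, ← List.replicate_add]
    rw [Nat.add_sub_cancel' hij.le]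
    exact hfe.symm
  have hd' := huniq _ hrec
  -- q is recurrent: q → d via replicate i a, d → q via [a]
  have hqrec : D.Recurrent q := by
    refine ⟨List.replicate i a ++ [a], by simp, ?_⟩
    rw [evalFrom_app, hd']
    simp [DFA.evalFrom, hq]
  exact huniq q hqrec

lemma evalFrom_dead {α σ : Type*} [Finite σ] (D : DFA α σ) (d : σ)
    (huniq : ∀ q : σ, D.Recurrent q → q = d) (x : List α) : D.evalFrom d x = d := by
  induction x with
  | nil => rfl
  | cons a t ih =>
    rw [DFA.evalFrom, List.foldl_cons, step_dead D d huniq a]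
    exact ih

theorem acyclic_accepts_short_and_finite {α σ : Type*} [Nonempty α] [Fintype α] [Fintype σ]
    (D : DFA α σ) (d : σ) (hd : D.Recurrent d)
    (huniq : ∀ q : σ, D.Recurrent q → q = d)
    (hdead : d ∉ D.accept) :
    (∀ x : List α, x ∈ D.accepts → x.length < Fintype.card σ) ∧
      Set.Finite {x : List α | x ∈ D.accepts} := by
  have main : ∀ x : List α, x ∈ D.accepts → x.length < Fintype.card σ := by
    intro x hx
    by_contra hlen
    push_neg at hlen
    -- pigeonhole on prefixes
    have hcard : Fintype.card σ < x.length + 1 := by omega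
    obtain ⟨i, j, hne, he⟩ := Fintype.exists_ne_map_eq_of_card_lt
      (fun k : Fin (x.length + 1) => D.evalFrom D.start (x.take k)) (by simpa using hcard)
    wlog hij : (i : ℕ) < (j : ℕ) generalizing i j
    · exact this j i hne.symm he.symm (by omega)
    have hsplit : x.take j = x.take i ++ (x.drop i).take (j - i) := by
      rw [← List.take_add, Nat.add_sub_cancel' hij.le]
    have hrec : D.Recurrent (D.evalFrom D.start (x.take i)) := by
      refine ⟨(x.drop i).take ((j : ℕ) - i), ?_, ?_⟩
      · have : ((x.drop i).take ((j : ℕ) - i)).length = min ((j : ℕ) - i) (x.length - i) := by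
          simp
        intro hnil
        rw [hnil] at this
        simp at this
        have hj : (j : ℕ) ≤ x.length := by omega
        omega
      · rw [← evalFrom_app, ← hsplit, he]
    have hdd := huniq _ hrec
    have : D.eval x = d := by
      have : x = x.take i ++ x.drop i := (List.take_append_drop _ _).symm
      rw [DFA.eval, this, evalFrom_app, hdd, evalFrom_dead D d huniq]
    exact hdead (this ▸ hx)
  refine ⟨main, Set.Finite.subset (List.finite_length_lt α (Fintype.card σ)) ?_⟩
  intro x hx
  exact main x hx
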